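/- Let p be a prime and A a commutative ring which is separated and complete for the p-adic topology (i.e., the natural map A → lim_n A/p^n A is a bijection). Then the natural map from the set of p-power-compatible sequences in A to the inverse limit of A/pA along the Frobenius, namely the map lim_{x↦x^p} A → lim_{x↦x^p} (A/pA) sending (x_i)_{i≥0} to (x_i mod p)_{i≥0}, is a bijection. -/
import Mathlib

private lemma iter_pow_aux {A : Type*} [CommMonoid A] {p : ℕ} {f : ℕ → A}
    (hf : ∀ i, (f (i + 1)) ^ p = f i) : ∀ n i, (f (i + n)) ^ (p ^ n) = f i := by
  intro n
  induction n with
  | zero => simp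
  | succ n ih =>
    intro i
    have h1 : i + (n + 1) = (i + n) + 1 := by omega
    rw [h1, pow_succ', pow_mul, hf, ih]

/-- For a commutative ring `A` which is separated and complete for the `p`-adic topology,
the natural map `lim_{x ↦ x^p} A → lim_{x ↦ x^p} (A/pA)`, sending a `p`-power-compatible
sequence in `A` to its componentwise reduction modulo `p`, is a bijection. -/
theorem tilt_of_padically_complete_ring_bijective (p : ℕ) [Fact p.Prime]
    (A : Type*) [CommRing A] [IsAdicComplete (Ideal.span {(p : A)}) A] :
    Function.Bijective
      (fun x : {f : ℕ → A // ∀ i, (f (i + 1)) ^ p = f i} =>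
        (⟨fun i => Ideal.Quotient.mk (Ideal.span {(p : A)}) (x.1 i),
          fun i => by rw [← map_pow, x.2 i]⟩ :
          {f : ℕ → A ⧸ Ideal.span {(p : A)} // ∀ i, (f (i + 1)) ^ p = f i})) := by
  set I : Ideal A := Ideal.span {(p : A)} with hI
  have hmem : ∀ (n : ℕ) (x : A),
      x ∈ (I ^ n • ⊤ : Submodule A A) ↔ (p : A) ^ n ∣ x := by
    intro n x
    rw [smul_eq_mul, Ideal.mul_top, hI, Ideal.span_singleton_pow, Ideal.mem_span_singleton]
  have hmk : ∀ x y : A, Ideal.Quotient.mk I x = Ideal.Quotient.mk I y ↔ (p : A) ∣ x - y := by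
    intro x y
    rw [Ideal.Quotient.eq, hI, Ideal.mem_span_singleton]
  constructor
  · -- Injectivity
    rintro ⟨x, hx⟩ ⟨y, hy⟩ h
    have h' : ∀ i, Ideal.Quotient.mk I (x i) = Ideal.Quotient.mk I (y i) := by
      intro i
      exact congrFun (congrArg Subtype.val h) i
    ext i
    have := IsAdicComplete.toIsHausdorff (I := I) (M := A)
    have hz : x i - y i = 0 := by
      refine this.haus (x i - y i) fun n => ?_
      rw [SModEq.sub_mem, sub_zero, hmem]
      have hxi : (x (i + n)) ^ (p ^ n) = x i := iter_pow_aux hx n i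
      have hyi : (y (i + n)) ^ (p ^ n) = y i := iter_pow_aux hy n i
      have hd : (p : A) ∣ x (i + n) - y (i + n) := (hmk _ _).1 (h' (i + n))
      have := dvd_sub_pow_of_dvd_sub hd n
      rw [hxi, hyi] at this
      exact dvd_trans (pow_dvd_pow (p : A) (Nat.le_succ n)) (by exact_mod_cast this)
    exact sub_eq_zero.1 hz
  · -- Surjectivity
    rintro ⟨y, hy⟩
    -- choose lifts of y
    have hlift : ∀ i, ∃ a : A, Ideal.Quotient.mk I a = y i := fun i =>
      Ideal.Quotient.mk_surjective (y i)
    choose a ha using hlift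
    -- key congruence: reductions of iterated powers of lifts
    have hcong : ∀ i k, (p : A) ∣ (a (i + k)) ^ (p ^ k) - a i := by
      intro i k
      rw [← hmk]
      rw [map_pow, ha, ha]
      exact iter_pow_aux hy k i
    -- Cauchy sequences and their limits
    have hL : ∀ i, ∃ L : A, ∀ n, (p : A) ^ n ∣ (a (i + n)) ^ (p ^ n) - L := by
      intro i
      have hpre := IsAdicComplete.toIsPrecomplete (I := I) (M := A)
      have hcauchy : ∀ {m n : ℕ}, m ≤ n →
          (fun n => (a (i + n)) ^ (p ^ n)) m ≡ (fun n => (a (i + n)) ^ (p ^ n)) n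
            [SMOD (I ^ m • ⊤ : Submodule A A)] := by
        intro m n hmn
        rw [SModEq.sub_mem, hmem]
        obtain ⟨k, rfl⟩ := Nat.exists_eq_add_of_le hmn
        have h1 : (a (i + (m + k))) ^ (p ^ (m + k)) =
            ((a (i + (m + k))) ^ (p ^ k)) ^ (p ^ m) := by
          rw [← pow_mul, ← pow_add, Nat.add_comm k m]
        have h2 : (p : A) ∣ (a (i + (m + k))) ^ (p ^ k) - a (i + m) := by
          have := hcong (i + m) k
          rwa [Nat.add_assoc] at this
        have := dvd_sub_pow_of_dvd_sub h2 m
        rw [← h1] at this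
        exact (dvd_sub_comm).1
            (dvd_trans (pow_dvd_pow (p : A) (Nat.le_succ m)) (by exact_mod_cast this))
      obtain ⟨L, hL⟩ := hpre.prec hcauchy
      exact ⟨L, fun n => (hmem n _).1 ((SModEq.sub_mem).1 (hL n))⟩
    choose L hLd using hL
    have hhaus := IsAdicComplete.toIsHausdorff (I := I) (M := A)
    -- compatibility of L
    have hcompat : ∀ i, (L (i + 1)) ^ p = L i := by
      intro i
      have hz : (L (i + 1)) ^ p - L i = 0 := by
        refine hhaus.haus _ fun n => ?_
        rw [SModEq.sub_mem, sub_zero, hmem]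
        have h1 : (p : A) ^ n ∣ (L (i + 1)) ^ p - ((a ((i + 1) + n)) ^ (p ^ n)) ^ p :=
          dvd_sub_comm.1 ((hLd (i + 1) n).trans (sub_dvd_pow_sub_pow _ _ p))
        have h2 : ((a ((i + 1) + n)) ^ (p ^ n)) ^ p = (a (i + (n + 1))) ^ (p ^ (n + 1)) := by
          rw [← pow_mul, ← pow_succ]
          congr 2
          omega
        have h3 : (p : A) ^ n ∣ (a (i + (n + 1))) ^ (p ^ (n + 1)) - L i :=
          dvd_trans (pow_dvd_pow (p : A) (Nat.le_succ n)) (hLd i (n + 1))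
        have heq : (L (i + 1)) ^ p - L i
            = ((L (i + 1)) ^ p - ((a ((i + 1) + n)) ^ (p ^ n)) ^ p)
              + (((a ((i + 1) + n)) ^ (p ^ n)) ^ p - L i) := by ring
        rw [heq]
        exact dvd_add h1 (h2 ▸ h3)
      exact sub_eq_zero.1 hz
    refine ⟨⟨L, hcompat⟩, ?_⟩
    ext i
    show Ideal.Quotient.mk I (L i) = y i
    have h1 : (p : A) ∣ (a (i + 1)) ^ (p ^ 1) - L i :=
      dvd_trans (by rw [pow_one]) (hLd i 1)
    have h2 : Ideal.Quotient.mk I (L i) = Ideal.Quotient.mk I ((a (i + 1)) ^ (p ^ 1)) := by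
      rw [hmk]
      exact dvd_sub_comm.1 h1
    rw [h2, map_pow, ha, pow_one, ← hy i]
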